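/- Let x be an automorphism of prime order p of a finite generalized quadrangle Q of order (s,t). (i) If the fixed substructure of x has type (2) and x fixes exactly one point, then s+1 ≡ 1 (mod p). (ii) If the fixed substructure of x has type (2) and x fixes at least two points, then t+1 ≡ 1 (mod p). (iii) If the fixed substructure of x has type (2') and x fixes exactly one line, then t+1 ≡ 1 (mod p). (iv) If the fixed substructure of x has type (2') and x fixes at least two lines, then s+1 ≡ 1 (mod p). -/

import Mathlib

/-- `IsGQ I s t` : the incidence relation `I` between the (finite) point type `P`
and line type `L` is a finite generalized quadrangle of order `(s,t)`. -/
structure IsGQ {P L : Type*} (I : P → L → Prop) (s t : ℕ) : Prop where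
  finP : Finite P
  finL : Finite L
  s_pos : 0 < s
  t_pos : 0 < t
  line_pts : ∀ ℓ : L, Nat.card {p : P // I p ℓ} = s + 1
  pt_lines : ∀ p : P, Nat.card {ℓ : L // I p ℓ} = t + 1
  unique_line : ∀ p q : P, p ≠ q → Nat.card {ℓ : L // I p ℓ ∧ I q ℓ} ≤ 1
  gq_axiom : ∀ (p : P) (ℓ : L), ¬ I p ℓ →
      ∃! pl : P × L, I p pl.2 ∧ I pl.1 pl.2 ∧ I pl.1 ℓ

/-- An automorphism of the incidence structure `I` : a pair of permutations of the
points and of the lines preserving incidence. -/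
@[ext] structure GQAut {P L : Type*} (I : P → L → Prop) where
  permP : Equiv.Perm P
  permL : Equiv.Perm L
  pres : ∀ p ℓ, I (permP p) (permL ℓ) ↔ I p ℓ

namespace GQAut

variable {P L : Type*} {I : P → L → Prop}

instance : Group (GQAut I) where
  mul x y := ⟨x.permP * y.permP, x.permL * y.permL, by
    intro p ℓ
    simp only [Equiv.Perm.mul_apply]
    rw [x.pres, y.pres]⟩
  one := ⟨1, 1, fun p ℓ => Iff.rfl⟩
  inv x := ⟨x.permP⁻¹, x.permL⁻¹, by
    intro p ℓ
    simpa using (x.pres (x.permP⁻¹ p) (x.permL⁻¹ ℓ)).symm⟩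
  mul_assoc a b c := by ext <;> rfl
  one_mul a := by ext <;> rfl
  mul_one a := by ext <;> rfl
  inv_mul_cancel a := by
    ext z
    · show a.permP⁻¹ (a.permP z) = z
      simp
    · show a.permL⁻¹ (a.permL z) = z
      simp

end GQAut

/-- Two points are collinear if some line is incident with both. -/
def Collin {P L : Type*} (I : P → L → Prop) (p q : P) : Prop := ∃ ℓ, I p ℓ ∧ I q ℓ

/-- Two lines are concurrent if some point is incident with both. -/
def Concur {P L : Type*} (I : P → L → Prop) (ℓ m : L) : Prop := ∃ p, I p ℓ ∧ I p m

/-- Number of points fixed by the automorphism `x`. -/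
noncomputable def alpha0 {P L : Type*} {I : P → L → Prop} (x : GQAut I) : ℕ :=
  Nat.card {p : P // x.permP p = p}

/-- Number of points moved by `x` to a distinct collinear point. -/
noncomputable def alpha1 {P L : Type*} {I : P → L → Prop} (x : GQAut I) : ℕ :=
  Nat.card {p : P // x.permP p ≠ p ∧ Collin I p (x.permP p)}

/-- Number of points sent by `x` to a noncollinear point. -/
noncomputable def alpha2 {P L : Type*} {I : P → L → Prop} (x : GQAut I) : ℕ :=
  Nat.card {p : P // ¬ Collin I p (x.permP p)}

/-- Number of lines fixed by the automorphism `x`. -/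
noncomputable def beta0 {P L : Type*} {I : P → L → Prop} (x : GQAut I) : ℕ :=
  Nat.card {ℓ : L // x.permL ℓ = ℓ}

/-- Number of lines moved by `x` to a distinct concurrent line. -/
noncomputable def beta1 {P L : Type*} {I : P → L → Prop} (x : GQAut I) : ℕ :=
  Nat.card {ℓ : L // x.permL ℓ ≠ ℓ ∧ Concur I ℓ (x.permL ℓ)}

/-- Number of lines sent by `x` to a nonconcurrent line. -/
noncomputable def beta2 {P L : Type*} {I : P → L → Prop} (x : GQAut I) : ℕ :=
  Nat.card {ℓ : L // ¬ Concur I ℓ (x.permL ℓ)}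

/-- The automorphism group is transitive on points. -/
def PointTransitive {P L : Type*} (I : P → L → Prop) : Prop :=
  ∀ p q : P, ∃ x : GQAut I, x.permP p = q

/-- The automorphism group is transitive on lines. -/
def LineTransitive {P L : Type*} (I : P → L → Prop) : Prop :=
  ∀ ℓ m : L, ∃ x : GQAut I, x.permL ℓ = m

/-- The fixed substructure of `x` has type (2): there is a fixed point `P₀` collinear
with every fixed point, at least one line is fixed, and every fixed line passes through `P₀`. -/
def FixedType2 {P L : Type*} (I : P → L → Prop) (x : GQAut I) : Prop :=
  ∃ P₀ : P, x.permP P₀ = P₀ ∧ (∀ p, x.permP p = p → Collin I P₀ p) ∧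
    (∃ ℓ, x.permL ℓ = ℓ) ∧ (∀ ℓ, x.permL ℓ = ℓ → I P₀ ℓ)

/-- The fixed substructure of `x` has type (2'): there is a fixed line `ℓ₀` concurrent
with every fixed line, at least one point is fixed, and every fixed point lies on `ℓ₀`. -/
def FixedType2' {P L : Type*} (I : P → L → Prop) (x : GQAut I) : Prop :=
  ∃ ℓ₀ : L, x.permL ℓ₀ = ℓ₀ ∧ (∀ ℓ, x.permL ℓ = ℓ → Concur I ℓ₀ ℓ) ∧
    (∃ p, x.permP p = p) ∧ (∀ p, x.permP p = p → I p ℓ₀)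

/-- The fixed substructure of `x` (fixed points and fixed lines with induced incidence)
is a generalized subquadrangle of order `(s', t')`. -/
def FixedSubGQ {P L : Type*} (I : P → L → Prop) (x : GQAut I) (s' t' : ℕ) : Prop :=
  IsGQ (fun (p : {p : P // x.permP p = p}) (ℓ : {ℓ : L // x.permL ℓ = ℓ}) => I p.1 ℓ.1) s' t'

/-- Auxiliary: counting lemma. If `σ^p = 1` for a prime `p`, the permutation `σ`
preserves the predicate `pr`, and `a₀` is the unique `σ`-fixed element satisfying `pr`,
then the number of elements satisfying `pr` is `≡ 1 (mod p)`. -/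
private lemma zkey {α : Type*} [Finite α] {p : ℕ} (hp : p.Prime) (σ : Equiv.Perm α)
    (hσ : σ ^ p = 1) (pr : α → Prop) (hpr : ∀ a, pr a ↔ pr (σ a))
    (a₀ : α) (h₀ : pr a₀) (hfix : σ a₀ = a₀)
    (huniq : ∀ a, pr a → σ a = a → a = a₀) :
    Nat.card {a // pr a} ≡ 1 [MOD p] := by
  classical
  set σ' : Equiv.Perm {a // pr a} := σ.subtypePerm (fun a => (hpr a).symm) with hσ'def
  have hσ'p : σ' ^ p = 1 := by
    ext a
    simp [hσ'def, Equiv.Perm.subtypePerm_pow, hσ]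
  haveI : Fact p.Prime := ⟨hp⟩
  have hpg : IsPGroup p (Subgroup.zpowers σ') := by
    intro g
    obtain ⟨k, hk⟩ := Subgroup.mem_zpowers_iff.mp g.2
    refine ⟨1, Subtype.ext ?_⟩
    have h1 : (g : Equiv.Perm {a // pr a}) ^ p = 1 := by
      rw [← hk, ← zpow_natCast, ← zpow_mul, mul_comm, zpow_mul, zpow_natCast,
        hσ'p, one_zpow]
    simpa [pow_one] using h1
  have e : MulAction.fixedPoints (Subgroup.zpowers σ') {a // pr a} ≃
      {b : {a // pr a} // σ' b = b} :=
    { toFun := fun b => ⟨b.1, b.2 ⟨σ', Subgroup.mem_zpowers σ'⟩⟩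
      invFun := fun b => ⟨b.1, by
        rintro ⟨g, k, hk⟩
        show g • b.1 = b.1
        rw [← hk]
        exact Equiv.Perm.zpow_apply_eq_self_of_apply_eq_self b.2 k⟩
      left_inv := fun b => rfl
      right_inv := fun b => rfl }
  have hcard1 : Nat.card {b : {a // pr a} // σ' b = b} = 1 := by
    rw [Nat.card_eq_one_iff_unique]
    constructor
    · constructor
      intro b c
      have hb : b.1.1 = a₀ := huniq _ b.1.2 (Subtype.ext_iff.mp b.2)
      have hc : c.1.1 = a₀ := huniq _ c.1.2 (Subtype.ext_iff.mp c.2)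
      exact Subtype.ext (Subtype.ext (hb.trans hc.symm))
    · exact ⟨⟨⟨a₀, h₀⟩, Subtype.ext hfix⟩⟩
  calc Nat.card {a // pr a}
      ≡ Nat.card (MulAction.fixedPoints (Subgroup.zpowers σ') {a // pr a}) [MOD p] :=
        hpg.card_modEq_card_fixedPoints _
    _ = 1 := by rw [Nat.card_congr e, hcard1]

private def permPHom {P L : Type*} {I : P → L → Prop} : GQAut I →* Equiv.Perm P where
  toFun := GQAut.permP
  map_one' := rfl
  map_mul' _ _ := rfl

private def permLHom {P L : Type*} {I : P → L → Prop} : GQAut I →* Equiv.Perm L where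
  toFun := GQAut.permL
  map_one' := rfl
  map_mul' _ _ := rfl

/-- For an automorphism x of prime order p of a GQ of order (s,t):
(i) type (2) with exactly one fixed point gives s+1 ≡ 1 (mod p);
(ii) type (2) with at least two fixed points gives t+1 ≡ 1 (mod p);
(iii) type (2') with exactly one fixed line gives t+1 ≡ 1 (mod p);
(iv) type (2') with at least two fixed lines gives s+1 ≡ 1 (mod p). -/
theorem statement9 {P L : Type*} (I : P → L → Prop) (s t : ℕ)
    (hGQ : IsGQ I s t) (p : ℕ) (hp : p.Prime) (x : GQAut I) (hx : orderOf x = p) :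
    (FixedType2 I x → alpha0 x = 1 → s + 1 ≡ 1 [MOD p]) ∧
    (FixedType2 I x → 2 ≤ alpha0 x → t + 1 ≡ 1 [MOD p]) ∧
    (FixedType2' I x → beta0 x = 1 → t + 1 ≡ 1 [MOD p]) ∧
    (FixedType2' I x → 2 ≤ beta0 x → s + 1 ≡ 1 [MOD p]) := by
  classical
  have finP : Finite P := hGQ.finP
  have finL : Finite L := hGQ.finL
  have hxp : x ^ p = 1 := by rw [← hx]; exact pow_orderOf_eq_one x
  have hPp : x.permP ^ p = 1 := by
    have := map_pow (permPHom (I := I)) x p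
    rw [hxp] at this
    exact this.symm
  have hLp : x.permL ^ p = 1 := by
    have := map_pow (permLHom (I := I)) x p
    rw [hxp] at this
    exact this.symm
  refine ⟨?_, ?_, ?_, ?_⟩
  · -- (i) type (2), exactly one fixed point
    rintro ⟨P₀, hP₀, _hcol, ⟨ℓ, hℓ⟩, hlines⟩ h1
    have hpr : ∀ q : P, I q ℓ ↔ I (x.permP q) ℓ := by
      intro q
      conv_rhs => rw [← hℓ]
      exact (x.pres q ℓ).symm
    have hss : Subsingleton {q : P // x.permP q = q} :=
      ((Nat.card_eq_one_iff_unique.mp h1).1)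
    have huniq : ∀ q : P, I q ℓ → x.permP q = q → q = P₀ := by
      intro q _ hq
      have := hss.elim ⟨q, hq⟩ ⟨P₀, hP₀⟩
      exact Subtype.ext_iff.mp this
    have := zkey hp x.permP hPp (fun q => I q ℓ) hpr P₀ (hlines ℓ hℓ) hP₀ huniq
    rwa [hGQ.line_pts ℓ] at this
  · -- (ii) type (2), at least two fixed points
    rintro ⟨P₀, hP₀, hcol, _hex, hlines⟩ h2
    have hnt : Nontrivial {q : P // x.permP q = q} :=
      Finite.one_lt_card_iff_nontrivial.mp h2
    obtain ⟨a, b, hab⟩ := hnt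
    obtain ⟨q, hq, hqne⟩ : ∃ q : P, x.permP q = q ∧ q ≠ P₀ := by
      by_cases ha : a.1 = P₀
      · refine ⟨b.1, b.2, fun hb => ?_⟩
        exact hab (Subtype.ext (ha.trans hb.symm))
      · exact ⟨a.1, a.2, ha⟩
    obtain ⟨m, hm₀, hmq⟩ := hcol q hq
    have hss : Subsingleton {n : L // I P₀ n ∧ I q n} :=
      Finite.card_le_one_iff_subsingleton.mp (hGQ.unique_line P₀ q (Ne.symm hqne))
    have hmfix : x.permL m = m := by
      have h1' : I P₀ (x.permL m) := by
        rw [← hP₀]; exact (x.pres P₀ m).mpr hm₀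
      have h2' : I q (x.permL m) := by
        rw [← hq]; exact (x.pres q m).mpr hmq
      exact Subtype.ext_iff.mp (hss.elim ⟨x.permL m, h1', h2'⟩ ⟨m, hm₀, hmq⟩)
    have hpr : ∀ n : L, I q n ↔ I q (x.permL n) := by
      intro n
      conv_rhs => rw [← hq]
      exact (x.pres q n).symm
    have huniq : ∀ n : L, I q n → x.permL n = n → n = m := by
      intro n hqn hn
      have hP₀n : I P₀ n := hlines n hn
      exact Subtype.ext_iff.mp (hss.elim ⟨n, hP₀n, hqn⟩ ⟨m, hm₀, hmq⟩)
    have := zkey hp x.permL hLp (fun n => I q n) hpr m hmq hmfix huniq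
    rwa [hGQ.pt_lines q] at this
  · -- (iii) type (2'), exactly one fixed line
    rintro ⟨ℓ₀, hℓ₀, _hconc, ⟨q, hq⟩, hpts⟩ h1
    have hss : Subsingleton {n : L // x.permL n = n} :=
      ((Nat.card_eq_one_iff_unique.mp h1).1)
    have hpr : ∀ n : L, I q n ↔ I q (x.permL n) := by
      intro n
      conv_rhs => rw [← hq]
      exact (x.pres q n).symm
    have huniq : ∀ n : L, I q n → x.permL n = n → n = ℓ₀ := by
      intro n _ hn
      exact Subtype.ext_iff.mp (hss.elim ⟨n, hn⟩ ⟨ℓ₀, hℓ₀⟩)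
    have := zkey hp x.permL hLp (fun n => I q n) hpr ℓ₀ (hpts q hq) hℓ₀ huniq
    rwa [hGQ.pt_lines q] at this
  · -- (iv) type (2'), at least two fixed lines
    rintro ⟨ℓ₀, hℓ₀, hconc, _hex, hpts⟩ h2
    have hnt : Nontrivial {n : L // x.permL n = n} :=
      Finite.one_lt_card_iff_nontrivial.mp h2
    obtain ⟨a, b, hab⟩ := hnt
    obtain ⟨m, hm, hmne⟩ : ∃ m : L, x.permL m = m ∧ m ≠ ℓ₀ := by
      by_cases ha : a.1 = ℓ₀
      · refine ⟨b.1, b.2, fun hb => ?_⟩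
        exact hab (Subtype.ext (ha.trans hb.symm))
      · exact ⟨a.1, a.2, ha⟩
    obtain ⟨r, hrℓ₀, hrm⟩ := hconc m hm
    -- the intersection point of `ℓ₀` and `m` is unique
    have hint : ∀ r' : P, I r' ℓ₀ → I r' m → r' = r := by
      intro r' h1' h2'
      by_contra hne
      have hss : Subsingleton {n : L // I r' n ∧ I r n} :=
        Finite.card_le_one_iff_subsingleton.mp (hGQ.unique_line r' r hne)
      have : m = ℓ₀ :=
        Subtype.ext_iff.mp (hss.elim ⟨m, h2', hrm⟩ ⟨ℓ₀, h1', hrℓ₀⟩)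
      exact hmne this
    have hrfix : x.permP r = r := by
      apply hint
      · rw [← hℓ₀]; exact (x.pres r ℓ₀).mpr hrℓ₀
      · rw [← hm]; exact (x.pres r m).mpr hrm
    have hpr : ∀ q : P, I q m ↔ I (x.permP q) m := by
      intro q
      conv_rhs => rw [← hm]
      exact (x.pres q m).symm
    have huniq : ∀ q : P, I q m → x.permP q = q → q = r := by
      intro q hqm hq
      exact hint q (hpts q hq) hqm
    have := zkey hp x.permP hPp (fun q => I q m) hpr r hrm hrfix huniq
    rwa [hGQ.line_pts m] at this
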